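/- Every ≅*-equivalent form of an abstraction λx^A.r is a product of abstractions: if λx^A.r ≅* s, then s = (λx^A.s₁)×⋯×(λx^A.sₙ) for some n ≥ 1 with r ≅* s₁×⋯×sₙ (for n=1, s = λx^A.s₁ with r ≅* s₁). -/

import Mathlib

/-- Types: A ::= τ | A ⇒ A | A ∧ A -/
inductive Ty : Type
  | tau : Ty
  | imp : Ty → Ty → Ty
  | conj : Ty → Ty → Ty
  deriving DecidableEq

/-- Type equivalence ≡: smallest congruence with the four isomorphisms. -/
inductive TyEq : Ty → Ty → Prop
  | refl (A) : TyEq A A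
  | symm {A B} : TyEq A B → TyEq B A
  | trans {A B C} : TyEq A B → TyEq B C → TyEq A C
  | impCongr {A A' B B'} : TyEq A A' → TyEq B B' → TyEq (.imp A B) (.imp A' B')
  | conjCongr {A A' B B'} : TyEq A A' → TyEq B B' → TyEq (.conj A B) (.conj A' B')
  | comm (A B) : TyEq (.conj A B) (.conj B A)
  | assoc (A B C) : TyEq (.conj A (.conj B C)) (.conj (.conj A B) C)
  | dist (A B C) : TyEq (.imp A (.conj B C)) (.conj (.imp A B) (.imp A C))
  | curry (A B C) : TyEq (.imp (.conj A B) C) (.imp A (.imp B C))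

/-- Add premise `a` to a prime factor: τ becomes a⇒τ (convention a∧∅ = a),
    c⇒τ becomes (a∧c)⇒τ. -/
def addPrem (a : Ty) : Ty → Ty
  | .tau => .imp a .tau
  | .imp c .tau => .imp (.conj a c) .tau
  | t => t

/-- Multiset of prime factors. -/
def PF : Ty → Multiset Ty
  | .tau => {.tau}
  | .imp a b => (PF b).map (addPrem a)
  | .conj a b => PF a + PF b

/-- Terms: r ::= x | λx^A.r | r r | r×r | π_A(r).  Variables are natural
numbers; a global assignment `vt : ℕ → Ty` gives each variable its intrinsic
type, so `x ∈ V_A` is rendered as `TyEq (vt x) A` (the partition respects ≡). -/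
inductive Tm : Type
  | var : ℕ → Tm
  | lam : Ty → ℕ → Tm → Tm
  | app : Tm → Tm → Tm
  | prod : Tm → Tm → Tm
  | proj : Ty → Tm → Tm
  deriving DecidableEq

/-- Typing judgment of System I-η. -/
inductive HasTy (vt : ℕ → Ty) : Tm → Ty → Prop
  | var {n A} : TyEq (vt n) A → HasTy vt (.var n) A
  | equiv {r A B} : HasTy vt r A → TyEq A B → HasTy vt r B
  | lam {A n r B} : TyEq (vt n) A → HasTy vt r B → HasTy vt (.lam A n r) (.imp A B)
  | app {r s A B} : HasTy vt r (.imp A B) → HasTy vt s A → HasTy vt (.app r s) B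
  | prod {r s A B} : HasTy vt r A → HasTy vt s B → HasTy vt (.prod r s) (.conj A B)
  | proj {r A B} : HasTy vt r (.conj A B) → HasTy vt (.proj A r) A

/-- Structural equivalence ≅ on terms: smallest symmetric, contextually closed
relation with comm, asso, dist, curry. -/
inductive TEq : Tm → Tm → Prop
  | comm (r s) : TEq (.prod r s) (.prod s r)
  | assoc (r s t) : TEq (.prod (.prod r s) t) (.prod r (.prod s t))
  | dist (A x r s) : TEq (.lam A x (.prod r s)) (.prod (.lam A x r) (.lam A x s))
  | curry (r s t) : TEq (.app (.app r s) t) (.app r (.prod s t))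
  | symm {r s} : TEq r s → TEq s r
  | lamCongr {r s} (A x) : TEq r s → TEq (.lam A x r) (.lam A x s)
  | appLeft {r s} (t) : TEq r s → TEq (.app r t) (.app s t)
  | appRight {r s} (t) : TEq r s → TEq (.app t r) (.app t s)
  | prodLeft {r s} (t) : TEq r s → TEq (.prod r t) (.prod s t)
  | prodRight {r s} (t) : TEq r s → TEq (.prod t r) (.prod t s)
  | projCongr {r s} (A) : TEq r s → TEq (.proj A r) (.proj A s)

/-- P counts the number of pairs in a term. -/
def Pm : Tm → ℕ
  | .var _ => 0
  | .lam _ _ r => Pm r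
  | .app _ _ => 0
  | .prod r s => 1 + Pm r + Pm s
  | .proj _ _ => 0

/-- The measure M on terms. -/
def Mm : Tm → ℕ
  | .var _ => 1
  | .lam _ _ r => 1 + Mm r + Pm r
  | .app r s => 1 + Mm r + Mm s
  | .prod r s => 1 + Mm r + Mm s
  | .proj _ r => 1 + Mm r

/-- `LamProd A x u s` : s is a product tree of abstractions λx^A.sᵢ whose
bodies form the product tree u of the same shape, i.e.
s = (λx^A.s₁)×⋯×(λx^A.sₙ) with u = s₁×⋯×sₙ (arbitrary parenthesization). -/
inductive LamProd (A : Ty) (x : ℕ) : Tm → Tm → Prop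
  | base (r) : LamProd A x r (.lam A x r)
  | prod {r₁ s₁ r₂ s₂} : LamProd A x r₁ s₁ → LamProd A x r₂ s₂ →
      LamProd A x (.prod r₁ r₂) (.prod s₁ s₂)

/-- Every ≅*-equivalent form of an abstraction is a product of abstractions
(on the same binder) whose bodies form a product ≅*-equivalent to the body. -/
private lemma rtg_prodLeft {a b : Tm} (t : Tm) (h : Relation.ReflTransGen TEq a b) :
    Relation.ReflTransGen TEq (.prod a t) (.prod b t) :=
  Relation.ReflTransGen.lift (fun z => Tm.prod z t) (fun _ _ h => TEq.prodLeft t h) _ _ h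

private lemma rtg_prodRight {a b : Tm} (t : Tm) (h : Relation.ReflTransGen TEq a b) :
    Relation.ReflTransGen TEq (.prod t a) (.prod t b) :=
  Relation.ReflTransGen.lift (fun z => Tm.prod t z) (fun _ _ h => TEq.prodRight t h) _ _ h

private lemma lamProd_step (A : Ty) (x : ℕ) :
    ∀ {s s' : Tm}, TEq s s' →
      (∀ u, LamProd A x u s → ∃ u', LamProd A x u' s' ∧ Relation.ReflTransGen TEq u u') ∧
      (∀ u, LamProd A x u s' → ∃ u', LamProd A x u' s ∧ Relation.ReflTransGen TEq u u') := by
  intro s s' h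
  induction h with
  | comm r s =>
    constructor
    · rintro u hu; rcases hu with _ | ⟨h1, h2⟩
      exact ⟨_, LamProd.prod ‹_› ‹_›, Relation.ReflTransGen.single (TEq.comm _ _)⟩
    · rintro u hu; rcases hu with _ | ⟨h1, h2⟩
      exact ⟨_, LamProd.prod ‹_› ‹_›, Relation.ReflTransGen.single (TEq.comm _ _)⟩
  | assoc r s t =>
    constructor
    · rintro u hu
      rcases hu with _ | ⟨h12, h3⟩
      rcases h12 with _ | ⟨h1, h2⟩
      exact ⟨_, LamProd.prod h1 (LamProd.prod h2 h3),
        Relation.ReflTransGen.single (TEq.assoc _ _ _)⟩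
    · rintro u hu
      rcases hu with _ | ⟨h1, h23⟩
      rcases h23 with _ | ⟨h2, h3⟩
      exact ⟨_, LamProd.prod (LamProd.prod h1 h2) h3,
        Relation.ReflTransGen.single (TEq.symm (TEq.assoc _ _ _))⟩
  | dist B y r s =>
    constructor
    · rintro u hu
      rcases hu with _ | _
      exact ⟨_, LamProd.prod (LamProd.base r) (LamProd.base s), Relation.ReflTransGen.refl⟩
    · rintro u hu
      rcases hu with _ | ⟨h1, h2⟩
      rcases h1 with _ | _
      rcases h2 with _ | _
      exact ⟨_, LamProd.base _, Relation.ReflTransGen.refl⟩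
  | curry r s t =>
    exact ⟨fun u hu => by rcases hu with _ | _, fun u hu => by rcases hu with _ | _⟩
  | symm h ih => exact ⟨ih.2, ih.1⟩
  | lamCongr B y h ih =>
    constructor
    · rintro u hu
      rcases hu with _ | _
      exact ⟨_, LamProd.base _, Relation.ReflTransGen.single h⟩
    · rintro u hu
      rcases hu with _ | _
      exact ⟨_, LamProd.base _, Relation.ReflTransGen.single (TEq.symm h)⟩
  | appLeft t h ih =>
    exact ⟨fun u hu => by rcases hu with _ | _, fun u hu => by rcases hu with _ | _⟩
  | appRight t h ih =>
    exact ⟨fun u hu => by rcases hu with _ | _, fun u hu => by rcases hu with _ | _⟩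
  | projCongr B h ih =>
    exact ⟨fun u hu => by rcases hu with _ | _, fun u hu => by rcases hu with _ | _⟩
  | prodLeft t h ih =>
    constructor
    · rintro u hu
      rcases hu with _ | ⟨h1, h2⟩
      obtain ⟨u', hu', hr⟩ := ih.1 _ h1
      exact ⟨_, LamProd.prod hu' h2, rtg_prodLeft _ hr⟩
    · rintro u hu
      rcases hu with _ | ⟨h1, h2⟩
      obtain ⟨u', hu', hr⟩ := ih.2 _ h1
      exact ⟨_, LamProd.prod hu' h2, rtg_prodLeft _ hr⟩
  | prodRight t h ih =>
    constructor
    · rintro u hu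
      rcases hu with _ | ⟨h1, h2⟩
      obtain ⟨u', hu', hr⟩ := ih.1 _ h2
      exact ⟨_, LamProd.prod h1 hu', rtg_prodRight _ hr⟩
    · rintro u hu
      rcases hu with _ | ⟨h1, h2⟩
      obtain ⟨u', hu', hr⟩ := ih.2 _ h2
      exact ⟨_, LamProd.prod h1 hu', rtg_prodRight _ hr⟩

theorem lam_class (A : Ty) (x : ℕ) (r s : Tm)
    (h : Relation.ReflTransGen TEq (.lam A x r) s) :
    ∃ u : Tm, LamProd A x u s ∧ Relation.ReflTransGen TEq r u := by
  induction h with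
  | refl => exact ⟨r, LamProd.base r, Relation.ReflTransGen.refl⟩
  | tail _ hbc ih =>
    obtain ⟨u, hu, hr⟩ := ih
    obtain ⟨u', hu', hr'⟩ := (lamProd_step A x hbc).1 u hu
    exact ⟨u', hu', hr.trans hr'⟩
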